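/- Let d_1, …, d_{n+1} ∈ ℕ and let A_1, …, A_{n+1} ⊂ ℕ^{n+1} be finite sets such that for each k every α ∈ A_k satisfies α_0 + ⋯ + α_n = d_k and {d_k e_0, …, d_k e_n} ⊆ A_k (where e_0, …, e_n is the standard basis). For each k and each α ∈ A_k, let μ_{k,α} be a Borel probability measure on ℝ absolutely continuous with respect to Lebesgue measure, and let the coefficients g_{k,α} be distributed according to the product measure ⊗_{k,α} μ_{k,α}. Consider the homogeneous fewnomial system g_k(x) = ∑_{α∈A_k} g_{k,α} x^α, k = 1, …, n+1, in the variables x = (x_0, …, x_n). Then, with probability one, the system g_1(x) = ⋯ = g_{n+1}(x) = 0 has no solution x ∈ ℝ^{n+1} ∖ {0}. -/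
import Mathlib


open MeasureTheory

/-- A homogeneous fewnomial system on `ℝ^{n+1}` with supports `A k ⊆ ℕ^{n+1}`. -/
noncomputable def homSystem {n : ℕ} (A : Fin (n + 1) → Finset (Fin (n + 1) → ℕ))
    (c : (k : Fin (n + 1)) → {α // α ∈ A k} → ℝ) (x : Fin (n + 1) → ℝ) :
    Fin (n + 1) → ℝ :=
  fun k => ∑ α : {α // α ∈ A k}, c k α * ∏ i, (x i) ^ (α.1 i)

open Set
open scoped ENNReal NNReal

universe u


lemma pi_ac_fin : ∀ (m : ℕ) {α : Fin m → Type u} [inst : ∀ i, MeasurableSpace (α i)]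
    (μ ν : ∀ i, Measure (α i)) [∀ i, SigmaFinite (μ i)] [∀ i, SigmaFinite (ν i)],
    (∀ i, μ i ≪ ν i) → Measure.pi μ ≪ Measure.pi ν := by
  intro m
  induction m with
  | zero =>
    intro α _ μ ν _ _ _
    rw [Measure.pi_of_empty μ, Measure.pi_of_empty ν]
  | succ m ih =>
    intro α _ μ ν _ _ h
    set e := MeasurableEquiv.piFinSuccAbove α 0 with he
    have hμ := (MeasurePreserving.symm e (measurePreserving_piFinSuccAbove μ 0)).map_eq
    have hν := (MeasurePreserving.symm e (measurePreserving_piFinSuccAbove ν 0)).map_eq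
    rw [← hμ, ← hν]
    exact e.symm.measurableEmbedding.absolutelyContinuous_map
      (Measure.AbsolutelyContinuous.prod (h 0) (ih _ _ (fun j => h _)))

lemma pi_ac {ι : Type*} [Fintype ι] {α : ι → Type u} [∀ i, MeasurableSpace (α i)]
    (μ ν : ∀ i, Measure (α i)) [∀ i, SigmaFinite (μ i)] [∀ i, SigmaFinite (ν i)]
    (h : ∀ i, μ i ≪ ν i) : Measure.pi μ ≪ Measure.pi ν := by
  obtain ⟨e⟩ : Nonempty (Fin (Fintype.card ι) ≃ ι) := ⟨(Fintype.equivFin ι).symm⟩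
  rw [← (measurePreserving_piCongrLeft μ e).map_eq, ← (measurePreserving_piCongrLeft ν e).map_eq]
  exact (MeasurableEquiv.piCongrLeft α e).measurableEmbedding.absolutelyContinuous_map
    (pi_ac_fin _ _ _ fun i => h (e i))



/-- The parametrization domain for the chart `x i = 1`. -/
abbrev phiDom {n : ℕ} (d : Fin (n + 1) → ℕ) (A : Fin (n + 1) → Finset (Fin (n + 1) → ℕ))
    (i : Fin (n + 1)) : Type :=
  ({j : Fin (n + 1) // j ≠ i} → ℝ) ×
    ((k : Fin (n + 1)) →
      {β : {α // α ∈ A k} // (β : Fin (n + 1) → ℕ) ≠ fun l => if l = i then d k else 0} → ℝ)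

/-- Parametrization of coefficient systems having a root in the chart `x i = 1`. -/
noncomputable def phiMap {n : ℕ} (d : Fin (n + 1) → ℕ) (A : Fin (n + 1) → Finset (Fin (n + 1) → ℕ))
    (i : Fin (n + 1)) (w : phiDom d A i) :
    (k : Fin (n + 1)) → {α // α ∈ A k} → ℝ := fun k α =>
  if hα : (α : Fin (n + 1) → ℕ) = fun l => if l = i then d k else 0 then
    - ∑ β : {α // α ∈ A k},
        (if hβ : (β : Fin (n + 1) → ℕ) = fun l => if l = i then d k else 0 then 0
          else w.2 k ⟨β, hβ⟩) *
          ∏ j, (if h : j = i then 1 else w.1 ⟨j, h⟩) ^ (β : Fin (n + 1) → ℕ) j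
  else w.2 k ⟨α, hα⟩

lemma phiMap_contDiff {n : ℕ} (d : Fin (n + 1) → ℕ) (A : Fin (n + 1) → Finset (Fin (n + 1) → ℕ))
    (i : Fin (n + 1)) : ContDiff ℝ 1 (phiMap d A i) := by
  have h1 : ∀ j : {j : Fin (n + 1) // j ≠ i}, ContDiff ℝ 1 fun w : phiDom d A i => w.1 j :=
    fun j => (ContinuousLinearMap.proj (R := ℝ) (φ := fun _ : {j : Fin (n + 1) // j ≠ i} => ℝ)
      j).contDiff.comp contDiff_fst
  have h2 : ∀ (k : Fin (n + 1))
      (β : {β : {α // α ∈ A k} // (β : Fin (n + 1) → ℕ) ≠ fun l => if l = i then d k else 0}),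
      ContDiff ℝ 1 fun w : phiDom d A i => w.2 k β :=
    fun k β => (ContinuousLinearMap.proj (R := ℝ)
        (φ := fun _ : {β : {α // α ∈ A k} // (β : Fin (n + 1) → ℕ) ≠
          fun l => if l = i then d k else 0} => ℝ) β).contDiff.comp
      ((ContinuousLinearMap.proj (R := ℝ) (φ := fun k : Fin (n + 1) =>
        ({β : {α // α ∈ A k} // (β : Fin (n + 1) → ℕ) ≠ fun l => if l = i then d k else 0} → ℝ))
        k).contDiff.comp contDiff_snd)
  rw [contDiff_pi]; intro k
  rw [contDiff_pi]; intro α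
  unfold phiMap
  by_cases hα : (α : Fin (n + 1) → ℕ) = fun l => if l = i then d k else 0
  · simp only [dif_pos hα]
    apply ContDiff.neg
    apply ContDiff.sum
    intro β _
    apply ContDiff.mul
    · by_cases hβ : (β : Fin (n + 1) → ℕ) = fun l => if l = i then d k else 0
      · simp only [dif_pos hβ]; exact contDiff_const
      · simp only [dif_neg hβ]; exact h2 k ⟨β, hβ⟩
    · apply contDiff_prod
      intro j _
      by_cases h : j = i
      · simp only [dif_pos h]; exact contDiff_const.pow _
      · simp only [dif_neg h]; exact (h1 ⟨j, h⟩).pow _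
  · simp only [dif_neg hα]; exact h2 k ⟨α, hα⟩

lemma bad_subset {n : ℕ} (d : Fin (n + 1) → ℕ) (A : Fin (n + 1) → Finset (Fin (n + 1) → ℕ))
    (hdeg : ∀ k, ∀ α ∈ A k, ∑ i, α i = d k)
    (hcorners : ∀ k, ∀ j : Fin (n + 1), (fun i => if i = j then d k else 0) ∈ A k) :
    {c : (k : Fin (n + 1)) → {α // α ∈ A k} → ℝ | ∃ x, x ≠ 0 ∧ homSystem A c x = 0} ⊆
      ⋃ i, Set.range (phiMap d A i) := by
  rintro c ⟨x, hx, hroot⟩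
  obtain ⟨i, hi⟩ : ∃ i, x i ≠ 0 := by
    by_contra hcon; push_neg at hcon; exact hx (funext hcon)
  refine Set.mem_iUnion.2 ⟨i, ?_⟩
  set y : Fin (n + 1) → ℝ := fun j => (x i)⁻¹ * x j with hy
  have hyi : y i = 1 := inv_mul_cancel₀ hi
  have hroot' : ∀ k, ∑ β : {α // α ∈ A k}, c k β * ∏ j, y j ^ (β : Fin (n + 1) → ℕ) j = 0 := by
    intro k
    have hP : ∀ β : {α // α ∈ A k}, (∏ j, y j ^ (β : Fin (n + 1) → ℕ) j)
        = (x i)⁻¹ ^ d k * ∏ j, x j ^ (β : Fin (n + 1) → ℕ) j := by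
      intro β
      simp only [hy, mul_pow, Finset.prod_mul_distrib]
      rw [Finset.prod_pow_eq_pow_sum, hdeg k β β.2]
    simp only [hP]
    have h0 : homSystem A c x k = 0 := by rw [hroot]; rfl
    calc ∑ β : {α // α ∈ A k}, c k β * ((x i)⁻¹ ^ d k * ∏ j, x j ^ (β : Fin (n + 1) → ℕ) j)
        = (x i)⁻¹ ^ d k * ∑ β : {α // α ∈ A k}, c k β * ∏ j, x j ^ (β : Fin (n + 1) → ℕ) j := by
          rw [Finset.mul_sum]; apply Finset.sum_congr rfl; intros; ring
      _ = 0 := by rw [show (∑ β : {α // α ∈ A k}, c k β * ∏ j, x j ^ (β : Fin (n + 1) → ℕ) j)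
                      = homSystem A c x k from rfl, h0, mul_zero]
  refine ⟨(fun j => y j.1, fun k β => c k β.1), ?_⟩
  have hxy : ∀ j, (if h : j = i then (1 : ℝ) else y j) = y j := by
    intro j
    by_cases h : j = i
    · rw [dif_pos h, h, hyi]
    · rw [dif_neg h]
  funext k α
  show phiMap d A i _ k α = c k α
  unfold phiMap
  by_cases hα : (α : Fin (n + 1) → ℕ) = fun l => if l = i then d k else 0
  · simp only [dif_pos hα, hxy]
    have hPα : (∏ j, y j ^ (α : Fin (n + 1) → ℕ) j) = 1 := by
      rw [hα]
      rw [Finset.prod_eq_single i (fun b _ hb => by simp only [if_neg hb, pow_zero])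
        (fun h => absurd (Finset.mem_univ i) h)]
      simp only [if_pos rfl, hyi, one_pow]
    have hsplit : (∑ β : {α // α ∈ A k},
        (if hβ : (β : Fin (n + 1) → ℕ) = fun l => if l = i then d k else 0 then 0 else c k β) *
          ∏ j, y j ^ (β : Fin (n + 1) → ℕ) j)
        = (∑ β : {α // α ∈ A k}, c k β * ∏ j, y j ^ (β : Fin (n + 1) → ℕ) j)
          - ∑ β : {α // α ∈ A k},
              (if β = α then c k β * ∏ j, y j ^ (β : Fin (n + 1) → ℕ) j else 0) := by
      rw [← Finset.sum_sub_distrib]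
      apply Finset.sum_congr rfl
      intro β _
      by_cases hβ : (β : Fin (n + 1) → ℕ) = fun l => if l = i then d k else 0
      · have hβα : β = α := Subtype.ext (hβ.trans hα.symm)
        rw [dif_pos hβ, if_pos hβα, zero_mul, sub_self]
      · have hβα : β ≠ α := fun h => hβ (by rw [h, hα])
        rw [dif_neg hβ, if_neg hβα, sub_zero]
    rw [hsplit, hroot' k, Finset.sum_ite_eq' Finset.univ α
      (fun β => c k β * ∏ j, y j ^ (β : Fin (n + 1) → ℕ) j),
      if_pos (Finset.mem_univ α), hPα, mul_one, zero_sub, neg_neg]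
  · simp only [dif_neg hα]

lemma finrank_phiDom_succ {n : ℕ} (d : Fin (n + 1) → ℕ)
    (A : Fin (n + 1) → Finset (Fin (n + 1) → ℕ))
    (hcorners : ∀ k, ∀ j : Fin (n + 1), (fun i => if i = j then d k else 0) ∈ A k)
    (i : Fin (n + 1)) :
    Module.finrank ℝ (phiDom d A i) + 1
      = Module.finrank ℝ ((k : Fin (n + 1)) → {α // α ∈ A k} → ℝ) := by
  have hcard1 : ∀ k : Fin (n + 1),
      Fintype.card {β : {α // α ∈ A k} //
        (β : Fin (n + 1) → ℕ) = fun l => if l = i then d k else 0} = 1 := by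
    intro k
    refine Fintype.card_eq_one_iff.mpr ⟨⟨⟨_, hcorners k i⟩, rfl⟩, fun b => ?_⟩
    exact Subtype.ext (Subtype.ext b.2)
  have hcardA : ∀ k : Fin (n + 1), 1 ≤ (A k).card :=
    fun k => Finset.card_pos.mpr ⟨_, hcorners k i⟩
  have hcard2 : ∀ k : Fin (n + 1),
      Fintype.card {β : {α // α ∈ A k} //
        (β : Fin (n + 1) → ℕ) ≠ fun l => if l = i then d k else 0} = (A k).card - 1 := by
    intro k
    rw [Fintype.card_subtype_compl, hcard1 k, Fintype.card_coe]
  have hcardi : Fintype.card {j : Fin (n + 1) // j ≠ i} = n := by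
    rw [Fintype.card_subtype_compl, Fintype.card_subtype_eq, Fintype.card_fin]
    omega
  rw [Module.finrank_prod, Module.finrank_fintype_fun_eq_card, hcardi,
    Module.finrank_pi_fintype, Module.finrank_pi_fintype]
  simp only [Module.finrank_fintype_fun_eq_card, hcard2, Fintype.card_coe]
  have : ∑ k : Fin (n + 1), (A k).card = ∑ k : Fin (n + 1), (1 + ((A k).card - 1)) :=
    Finset.sum_congr rfl fun k _ => (Nat.add_sub_cancel' (hcardA k)).symm
  rw [this, Finset.sum_add_distrib, Finset.sum_const, Finset.card_univ, Fintype.card_fin,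
    smul_eq_mul, mul_one]
  omega

theorem overdetermined_homogeneous_no_nonzero_root_almost_surely
    (n : ℕ) (d : Fin (n + 1) → ℕ) (A : Fin (n + 1) → Finset (Fin (n + 1) → ℕ))
    (hdeg : ∀ k, ∀ α ∈ A k, ∑ i, α i = d k)
    (hcorners : ∀ k, ∀ j : Fin (n + 1), (fun i => if i = j then d k else 0) ∈ A k)
    (μ : (k : Fin (n + 1)) → {α // α ∈ A k} → Measure ℝ)
    (hprob : ∀ k α, IsProbabilityMeasure (μ k α))
    (hac : ∀ k α, μ k α ≪ volume) :
    ∀ᵐ c ∂(Measure.pi fun k => Measure.pi fun α => μ k α),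
      ¬∃ x : Fin (n + 1) → ℝ, x ≠ 0 ∧ homSystem A c x = 0 := by
  haveI : ∀ k α, SigmaFinite (μ k α) := fun k α => by haveI := hprob k α; infer_instance
  set Bad : Set ((k : Fin (n + 1)) → {α // α ∈ A k} → ℝ) :=
    {c | ∃ x, x ≠ 0 ∧ homSystem A c x = 0} with hBad
  -- Hausdorff dimension bound
  have hdim : dimH Bad
      < (Module.finrank ℝ ((k : Fin (n + 1)) → {α // α ∈ A k} → ℝ) : ℝ≥0∞) := by
    calc dimH Bad ≤ dimH (⋃ i, Set.range (phiMap d A i)) :=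
          dimH_mono (bad_subset d A hdeg hcorners)
      _ = ⨆ i, dimH (Set.range (phiMap d A i)) := dimH_iUnion _
      _ ≤ ((Module.finrank ℝ ((k : Fin (n + 1)) → {α // α ∈ A k} → ℝ) - 1 : ℕ) : ℝ≥0∞) := by
          refine iSup_le fun i => ((phiMap_contDiff d A i).dimH_range_le).trans ?_
          have h0 := finrank_phiDom_succ d A hcorners i
          have h2 : Module.finrank ℝ (phiDom d A i)
              ≤ Module.finrank ℝ ((k : Fin (n + 1)) → {α // α ∈ A k} → ℝ) - 1 := by omega
          exact_mod_cast h2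
      _ < (Module.finrank ℝ ((k : Fin (n + 1)) → {α // α ∈ A k} → ℝ) : ℝ≥0∞) := by
          have h0 := finrank_phiDom_succ d A hcorners 0
          have h2 : Module.finrank ℝ ((k : Fin (n + 1)) → {α // α ∈ A k} → ℝ) - 1
              < Module.finrank ℝ ((k : Fin (n + 1)) → {α // α ∈ A k} → ℝ) := by omega
          exact_mod_cast h2
  have hH : μH[(Module.finrank ℝ ((k : Fin (n + 1)) → {α // α ∈ A k} → ℝ) : ℝ)] Bad = 0 := by
    have h2 : dimH Bad
        < ((Module.finrank ℝ ((k : Fin (n + 1)) → {α // α ∈ A k} → ℝ) : ℝ≥0) : ℝ≥0∞) := by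
      exact_mod_cast hdim
    have h3 := hausdorffMeasure_of_dimH_lt h2
    simpa using h3
  have hvol : (volume : Measure ((k : Fin (n + 1)) → {α // α ∈ A k} → ℝ)) Bad = 0 :=
    Measure.absolutelyContinuous_isAddHaarMeasure volume
      μH[(Module.finrank ℝ ((k : Fin (n + 1)) → {α // α ∈ A k} → ℝ) : ℝ)] hH
  have hP : (Measure.pi fun k => Measure.pi fun α => μ k α) Bad = 0 := by
    have hin : ∀ k, Measure.pi (fun α => μ k α)
        ≪ Measure.pi (fun _ : {α // α ∈ A k} => (volume : Measure ℝ)) :=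
      fun k => pi_ac _ _ (hac k)
    have houter : (Measure.pi fun k => Measure.pi fun α => μ k α)
        ≪ Measure.pi (fun k => Measure.pi fun _ : {α // α ∈ A k} => (volume : Measure ℝ)) :=
      pi_ac _ _ hin
    refine houter ?_
    have hvol_eq : (volume : Measure ((k : Fin (n + 1)) → {α // α ∈ A k} → ℝ))
        = Measure.pi (fun k => Measure.pi fun _ : {α // α ∈ A k} => (volume : Measure ℝ)) := by
      rw [MeasureTheory.volume_pi]
      exact congrArg Measure.pi (funext fun k => MeasureTheory.volume_pi)
    rw [← hvol_eq]
    exact hvol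
  have := measure_eq_zero_iff_ae_notMem.mp hP
  filter_upwards [this] with c hc
  exact hc
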